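/- arXiv:2601.18655 — 4 statements merged into one kernel-verified Lean document; each statement's English description precedes it below -/
import Mathlib

section
/- For N > 0, the function f(β) = (√(βN) + √(βN+1))² (1-β) N on [0,1] attains its maximum at β* = N/(2N+1). -/
open Real

theorem stmt_0 (N : ℝ) (hN : 0 < N) :
    ∀ β ∈ Set.Icc (0:ℝ) 1,
      (Real.sqrt (β * N) + Real.sqrt (β * N + 1))^2 * (1 - β) * N ≤
      (Real.sqrt ((N / (2 * N + 1)) * N) + Real.sqrt ((N / (2 * N + 1)) * N + 1))^2 *
        (1 - N / (2 * N + 1)) * N := by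
  have h2N : (0:ℝ) < 2 * N + 1 := by linarith
  have hsq : (Real.sqrt (2 * N + 1))^2 = 2 * N + 1 := Real.sq_sqrt h2N.le
  have hs0 : 0 < Real.sqrt (2 * N + 1) := Real.sqrt_pos.mpr h2N
  have e1 : (N / (2 * N + 1)) * N = N^2 / (2 * N + 1) := by ring
  have e2 : (N / (2 * N + 1)) * N + 1 = (N + 1)^2 / (2 * N + 1) := by
    field_simp; ring
  have s1 : Real.sqrt ((N / (2 * N + 1)) * N) = N / Real.sqrt (2 * N + 1) := by
    rw [e1, Real.sqrt_div (by positivity), Real.sqrt_sq hN.le]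
  have s2 : Real.sqrt ((N / (2 * N + 1)) * N + 1) = (N + 1) / Real.sqrt (2 * N + 1) := by
    rw [e2, Real.sqrt_div (by positivity), Real.sqrt_sq (by linarith)]
  have hRHS : (Real.sqrt ((N / (2 * N + 1)) * N) + Real.sqrt ((N / (2 * N + 1)) * N + 1))^2 *
        (1 - N / (2 * N + 1)) * N = N * (N + 1) := by
    rw [s1, s2, ← add_div, div_pow, hsq]
    field_simp
    ring
  intro β hβ
  obtain ⟨hβ0, hβ1⟩ := hβ
  set a := Real.sqrt (β * N) with haa
  set b := Real.sqrt (β * N + 1) with hbb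
  have ha0 : 0 ≤ a := Real.sqrt_nonneg _
  have hb0 : 0 ≤ b := Real.sqrt_nonneg _
  have hβN : 0 ≤ β * N := mul_nonneg hβ0 hN.le
  have ha2 : a^2 = β * N := Real.sq_sqrt hβN
  have hb2 : b^2 = β * N + 1 := Real.sq_sqrt (by linarith)
  rw [hRHS, mul_assoc]
  have key : (1 - β) * N = N - a^2 := by rw [ha2]; ring
  rw [key]
  nlinarith [sq_nonneg ((a + b)^2 - (2 * N + 1)), sq_nonneg (2 * a * (a + b) - 2 * N), hb2,
    mul_nonneg ha0 hb0, sq_nonneg (a + b)]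
end

section
/- For ε, ζ > 0, the Gamma–Gamma density f(z) = (2(εζ)^{(ε+ζ)/2} / (Γ(ε)Γ(ζ))) · z^{(ε+ζ)/2 - 1} · K_{ε-ζ}(2√(εζ z)) integrates to 1 over (0,∞). -/
open Real MeasureTheory

/-- Modified Bessel function of the second kind (for `x > 0`),
via its standard integral representation. -/
noncomputable def besselK (ν x : ℝ) : ℝ :=
  ∫ t in Set.Ioi (0:ℝ), Real.exp (-x * Real.cosh t) * Real.cosh (ν * t)

open Set

lemma cosh_ge_sq (s : ℝ) : s^2/4 ≤ Real.cosh s := by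
  have h2 : Real.exp |s| ≤ Real.exp s + Real.exp (-s) := by
    rcases abs_cases s with ⟨h, _⟩ | ⟨h, _⟩
    · rw [h]; linarith [(Real.exp_pos (-s)).le]
    · rw [h]; linarith [(Real.exp_pos s).le]
  have h3 := Real.quadratic_le_exp_of_nonneg (abs_nonneg s)
  rw [Real.cosh_eq]
  have h4 : |s|^2 = s^2 := sq_abs s
  nlinarith [abs_nonneg s]

lemma intA (y ν : ℝ) (hy : 0 < y) :
    Integrable (fun s : ℝ => Real.exp (-y * Real.cosh s + ν * s)) := by
  apply Integrable.mono'
    ((integrable_exp_neg_mul_sq (show (0:ℝ) < y/8 by positivity)).const_mul (Real.exp (2*ν^2/y)))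
  · exact Continuous.aestronglyMeasurable (by continuity)
  · refine Filter.Eventually.of_forall fun s => ?_
    rw [Real.norm_eq_abs, abs_of_pos (Real.exp_pos _), ← Real.exp_add]
    apply Real.exp_le_exp.2
    have h1 := cosh_ge_sq s
    rw [← mul_le_mul_iff_right₀ hy]
    have h2 : y * (2*ν^2/y + -(y/8)*s^2) = 2*ν^2 + -(y^2/8)*s^2 := by field_simp
    rw [h2]
    nlinarith [mul_le_mul_of_nonneg_left h1 (mul_pos hy hy).le, sq_nonneg (y*s - 4*ν)]

lemma cov_deriv (y x : ℝ) :
    HasDerivAt (fun s : ℝ => y/2 * Real.exp (-s)) (-(y/2 * Real.exp (-x))) x := by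
  have := ((hasDerivAt_neg x).exp).const_mul (y/2)
  convert this using 1
  · rfl
  · rfl
  · ring

lemma cov_inj {y : ℝ} (hy : 0 < y) :
    Function.Injective (fun s : ℝ => y/2 * Real.exp (-s)) := by
  intro a b h
  simp only at h
  have h2 := mul_left_cancel₀ (by positivity : (y/2:ℝ) ≠ 0) h
  have h3 := Real.exp_injective h2
  simpa using h3

lemma cov_image {y : ℝ} (hy : 0 < y) :
    (fun s : ℝ => y/2 * Real.exp (-s)) '' univ = Ioi 0 := by
  rw [Set.image_univ]
  ext t
  simp only [Set.mem_range, Set.mem_Ioi]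
  constructor
  · rintro ⟨s, rfl⟩; positivity
  · intro ht
    refine ⟨Real.log (y/(2*t)), ?_⟩
    rw [Real.exp_neg, Real.exp_log (by positivity)]
    field_simp

lemma cov_pointwise {y : ℝ} (hy : 0 < y) (ν s : ℝ) :
    |(-(y/2 * Real.exp (-s)))| • (Real.exp (-(y/2 * Real.exp (-s)) - y^2/(4*(y/2 * Real.exp (-s)))) *
        (y/2 * Real.exp (-s)) ^ (-ν-1))
      = (y/2)^(-ν) * Real.exp (-y * Real.cosh s + ν * s) := by
  have h0 : (0:ℝ) < Real.exp (-s) := Real.exp_pos _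
  have hy2 : (0:ℝ) < y/2 := by positivity
  have hT : -(y/2 * Real.exp (-s)) - y^2/(4*(y/2 * Real.exp (-s))) = -y * Real.cosh s := by
    rw [Real.cosh_eq, Real.exp_neg]
    field_simp
    ring
  rw [abs_neg, abs_of_pos (by positivity), smul_eq_mul, hT,
    Real.mul_rpow hy2.le h0.le, ← Real.exp_mul,
    show (y/2:ℝ)^(-ν) = (y/2)^(-ν-1) * (y/2) by
      rw [← Real.rpow_add_one hy2.ne' (-ν-1)]; norm_num,
    ]
  rw [show y / 2 * Real.exp (-s) * (Real.exp (-y * Real.cosh s) * ((y / 2) ^ (-ν - 1) * Real.exp (-s * (-ν - 1))))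
      = (y / 2) ^ (-ν - 1) * (y / 2) * (Real.exp (-s) * Real.exp (-y * Real.cosh s) * Real.exp (-s * (-ν - 1))) by ring,
    ← Real.exp_add, ← Real.exp_add]
  congr 1
  ring

lemma h_repr {y : ℝ} (hy : 0 < y) (ν : ℝ) :
    ∫ t in Ioi (0:ℝ), Real.exp (-t - y^2/(4*t)) * t^(-ν-1)
      = (y/2)^(-ν) * ∫ s : ℝ, Real.exp (-y * Real.cosh s + ν * s) := by
  have key := integral_image_eq_integral_abs_deriv_smul MeasurableSet.univ
    (fun x _ => (cov_deriv y x).hasDerivWithinAt) ((cov_inj hy).injOn)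
    (fun t => Real.exp (-t - y^2/(4*t)) * t^(-ν-1))
  rw [cov_image hy, Measure.restrict_univ] at key
  rw [key]
  simp only [cov_pointwise hy ν]
  rw [integral_const_mul]

lemma int_h {y : ℝ} (hy : 0 < y) (ν : ℝ) :
    IntegrableOn (fun t => Real.exp (-t - y^2/(4*t)) * t^(-ν-1)) (Ioi (0:ℝ)) := by
  have key := integrableOn_image_iff_integrableOn_abs_deriv_smul MeasurableSet.univ
    (fun x (_ : x ∈ univ) => (cov_deriv y x).hasDerivWithinAt) ((cov_inj hy).injOn)
    (fun t => Real.exp (-t - y^2/(4*t)) * t^(-ν-1))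
  rw [cov_image hy] at key
  rw [IntegrableOn, ← integrableOn_univ] at *
  rw [key]
  refine Integrable.congr (((intA y ν hy).const_mul ((y/2)^(-ν))).integrableOn) ?_
  exact Filter.Eventually.of_forall fun s => (cov_pointwise hy ν s).symm

lemma besselK_eq {y : ℝ} (hy : 0 < y) (ν : ℝ) :
    besselK ν y = 1/2 * (y/2)^ν * ∫ t in Ioi (0:ℝ), Real.exp (-t - y^2/(4*t)) * t^(-ν-1) := by
  have hA := intA y ν hy
  have hB := intA y (-ν) hy
  have h1 : besselK ν y = 1/2 * ∫ s : ℝ, Real.exp (-y * Real.cosh s + ν * s) := by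
    unfold besselK
    have key : ∀ s : ℝ, Real.exp (-y * Real.cosh s) * Real.cosh (ν * s)
        = (Real.exp (-y * Real.cosh s + ν * s) + Real.exp (-y * Real.cosh s + -ν * s)) / 2 := by
      intro s
      rw [Real.cosh_eq (ν*s),
        show Real.exp (-y * Real.cosh s) * ((Real.exp (ν*s) + Real.exp (-(ν*s))) / 2)
          = (Real.exp (-y * Real.cosh s) * Real.exp (ν*s) + Real.exp (-y * Real.cosh s) * Real.exp (-(ν*s))) / 2 by ring,
        ← Real.exp_add, ← Real.exp_add]
      ring_nf
    simp only [key]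
    rw [integral_div, integral_add hA.integrableOn hB.integrableOn]
    have h2 : ∫ s in Ioi (0:ℝ), Real.exp (-y * Real.cosh s + -ν * s)
        = ∫ s in Iic (0:ℝ), Real.exp (-y * Real.cosh s + ν * s) := by
      rw [show (Iic (0:ℝ)) = Iic (-(0:ℝ)) by norm_num,
        ← integral_comp_neg_Ioi 0 (fun s => Real.exp (-y * Real.cosh s + ν * s))]
      refine setIntegral_congr_fun measurableSet_Ioi fun s _ => ?_
      rw [Real.cosh_neg]
      ring_nf
    rw [h2, add_comm, intervalIntegral.integral_Iic_add_Ioi hA.integrableOn hA.integrableOn]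
    ring
  rw [h1, h_repr hy ν, ← mul_assoc, mul_assoc (1/2 : ℝ), ← Real.rpow_add (by positivity)]
  norm_num

theorem stmt_11 (ε ζ : ℝ) (hε : 0 < ε) (hζ : 0 < ζ) :
    ∫ z in Set.Ioi (0:ℝ),
      (2 * (ε * ζ) ^ ((ε + ζ) / 2) / (Real.Gamma ε * Real.Gamma ζ)) *
        z ^ ((ε + ζ) / 2 - 1) * besselK (ε - ζ) (2 * Real.sqrt (ε * ζ * z)) = 1 := by
  have hc : 0 < ε * ζ := mul_pos hε hζ
  have hΓε := Real.Gamma_pos_of_pos hε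
  have hΓζ := Real.Gamma_pos_of_pos hζ
  set c := ε * ζ with hcdef
  set ν := ε - ζ with hνdef
  set K := c ^ ε / (Real.Gamma ε * Real.Gamma ζ) with hKdef
  have hK : 0 < K := by positivity
  -- rewrite h-integrand with cz/t
  have hsq : ∀ z : ℝ, 0 < z → ∀ t : ℝ, (2 * Real.sqrt (c*z))^2/(4*t) = c*z/t := by
    intro z hz t
    rw [mul_pow, Real.sq_sqrt (by positivity)]
    rw [show (2:ℝ)^2 * (c*z) = 4*(c*z) by ring, mul_div_mul_left _ _ (by norm_num : (4:ℝ) ≠ 0)]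
  have int_h' : ∀ z : ℝ, 0 < z →
      IntegrableOn (fun t => Real.exp (-t - c*z/t) * t^(-ν-1)) (Ioi (0:ℝ)) := by
    intro z hz
    have := int_h (show (0:ℝ) < 2 * Real.sqrt (c*z) by positivity) ν
    refine this.congr_fun (fun t _ => ?_) measurableSet_Ioi
    simp only [hsq z hz t]
  -- Step 1 : pointwise rewriting of the integrand
  have step1 : ∀ z ∈ Ioi (0:ℝ),
      (2 * c ^ ((ε + ζ) / 2) / (Real.Gamma ε * Real.Gamma ζ)) * z ^ ((ε + ζ) / 2 - 1)
          * besselK ν (2 * Real.sqrt (c * z))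
        = K * (z ^ (ε - 1) * ∫ t in Ioi (0:ℝ), Real.exp (-t - c*z/t) * t ^ (-ν-1)) := by
    intro z hz
    rw [mem_Ioi] at hz
    have hy : 0 < 2 * Real.sqrt (c * z) := by positivity
    rw [besselK_eq hy ν]
    have hy2 : (2 * Real.sqrt (c*z)) / 2 = Real.sqrt (c*z) := by ring
    rw [hy2]
    have hint : (∫ t in Ioi (0:ℝ), Real.exp (-t - (2 * Real.sqrt (c*z))^2/(4*t)) * t^(-ν-1))
        = ∫ t in Ioi (0:ℝ), Real.exp (-t - c*z/t) * t^(-ν-1) := by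
      refine setIntegral_congr_fun measurableSet_Ioi fun t _ => ?_
      rw [hsq z hz t]
    rw [hint]
    have e1 : Real.sqrt (c*z) ^ ν = c ^ (ν/2) * z ^ (ν/2) := by
      rw [Real.sqrt_eq_rpow, ← Real.rpow_mul (by positivity), Real.mul_rpow hc.le hz.le]
      rw [show 1/2 * ν = ν/2 by ring]
    have e2 : z ^ ((ε+ζ)/2 - 1) * z ^ (ν/2) = z ^ (ε-1) := by
      rw [← Real.rpow_add hz]
      congr 1
      rw [hνdef]; ring
    have e3 : c ^ ((ε+ζ)/2) * c ^ (ν/2) = c ^ ε := by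
      rw [← Real.rpow_add hc]
      congr 1
      rw [hνdef]; ring
    calc (2 * c ^ ((ε + ζ) / 2) / (Real.Gamma ε * Real.Gamma ζ)) * z ^ ((ε + ζ) / 2 - 1)
          * (1/2 * Real.sqrt (c*z) ^ ν * ∫ t in Ioi (0:ℝ), Real.exp (-t - c*z/t) * t ^ (-ν-1))
        = (c ^ ((ε+ζ)/2) * c ^ (ν/2)) / (Real.Gamma ε * Real.Gamma ζ) *
            ((z ^ ((ε+ζ)/2 - 1) * z ^ (ν/2)) * ∫ t in Ioi (0:ℝ), Real.exp (-t - c*z/t) * t ^ (-ν-1)) := by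
          rw [e1]; ring
      _ = K * (z ^ (ε - 1) * ∫ t in Ioi (0:ℝ), Real.exp (-t - c*z/t) * t ^ (-ν-1)) := by
          rw [e2, e3, hKdef]
  rw [setIntegral_congr_fun measurableSet_Ioi step1]
  -- measurability
  have hmeas2 : Measurable fun p : ℝ × ℝ => Real.exp (-p.2 - c*p.1/p.2) * p.2 ^ (-ν-1) := by
    exact ((measurable_snd.neg.sub ((measurable_fst.const_mul c).div measurable_snd)).exp).mul
      (measurable_snd.pow_const _)
  have hHmeas : StronglyMeasurable fun z : ℝ =>
      ∫ t in Ioi (0:ℝ), Real.exp (-t - c*z/t) * t ^ (-ν-1) :=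
    (hmeas2.stronglyMeasurable).integral_prod_right'
  have hHnn : ∀ z : ℝ, 0 ≤ ∫ t in Ioi (0:ℝ), Real.exp (-t - c*z/t) * t ^ (-ν-1) :=
    fun z => setIntegral_nonneg measurableSet_Ioi fun t ht => by
      have := mem_Ioi.mp ht; positivity
  rw [integral_eq_lintegral_of_nonneg_ae (f := fun z => K * (z ^ (ε - 1) * ∫ t in Ioi (0:ℝ), Real.exp (-t - c*z/t) * t ^ (-ν-1)))
    ((ae_restrict_iff' measurableSet_Ioi).mpr (ae_of_all _ fun z hz => by
      have hz' := mem_Ioi.mp hz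
      exact mul_nonneg hK.le (mul_nonneg (Real.rpow_nonneg hz'.le _) (hHnn z))))
    ((((measurable_id'.pow_const (ε-1)).mul hHmeas.measurable).const_mul
      K).aestronglyMeasurable)]
  rw [ENNReal.toReal_eq_one_iff]
  -- to double lintegral
  have inner_eq : ∀ z ∈ Ioi (0:ℝ),
      ENNReal.ofReal (K * (z ^ (ε - 1) * ∫ t in Ioi (0:ℝ), Real.exp (-t - c*z/t) * t ^ (-ν-1)))
        = ∫⁻ t in Ioi (0:ℝ),
            ENNReal.ofReal ((K * z ^ (ε - 1)) * (Real.exp (-t - c*z/t) * t ^ (-ν-1))) := by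
    intro z hz
    rw [mem_Ioi] at hz
    rw [show K * (z ^ (ε - 1) * ∫ t in Ioi (0:ℝ), Real.exp (-t - c*z/t) * t ^ (-ν-1))
        = ∫ t in Ioi (0:ℝ), (K * z ^ (ε - 1)) * (Real.exp (-t - c*z/t) * t ^ (-ν-1)) by
      rw [integral_const_mul]; ring]
    exact ofReal_integral_eq_lintegral_ofReal ((int_h' z hz).const_mul _)
      ((ae_restrict_iff' measurableSet_Ioi).mpr (ae_of_all _ fun t ht => by
        have ht' := mem_Ioi.mp ht
        have hz' := hz
        positivity))
  rw [setLIntegral_congr_fun measurableSet_Ioi inner_eq]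
  have hmeasp : Measurable fun p : ℝ × ℝ =>
      ENNReal.ofReal ((K * p.1 ^ (ε - 1)) * (Real.exp (-p.2 - c*p.1/p.2) * p.2 ^ (-ν-1))) :=
    (((measurable_fst.pow_const _).const_mul K).mul hmeas2).ennreal_ofReal
  rw [lintegral_lintegral_swap hmeasp.aemeasurable]
  -- inner z-integral
  have inner2 : ∀ t ∈ Ioi (0:ℝ),
      (∫⁻ z in Ioi (0:ℝ), ENNReal.ofReal ((K * z ^ (ε - 1)) * (Real.exp (-t - c*z/t) * t ^ (-ν-1))))
        = ENNReal.ofReal ((1 / Real.Gamma ζ) * (Real.exp (-t) * t ^ (ζ-1))) := by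
    intro t ht
    rw [mem_Ioi] at ht
    have hct : 0 < c / t := by positivity
    have hpt : ∀ z : ℝ, (K * z ^ (ε - 1)) * (Real.exp (-t - c*z/t) * t ^ (-ν-1))
        = (K * Real.exp (-t) * t ^ (-ν-1)) * (z ^ (ε - 1) * Real.exp (-(c/t * z))) := by
      intro z
      rw [show -t - c*z/t = -t + -(c/t*z) by ring, Real.exp_add]
      ring
    simp_rw [hpt]
    rw [← ofReal_integral_eq_lintegral_ofReal]
    · rw [integral_const_mul, integral_rpow_mul_exp_neg_mul_Ioi hε hct]
      congr 1
      have e4 : (1/(c/t)) ^ ε = t ^ ε / c ^ ε := by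
        rw [one_div_div, Real.div_rpow ht.le hc.le]
      rw [e4]
      have e5 : t ^ (-ν-1) * t ^ ε = t ^ (ζ-1) := by
        rw [← Real.rpow_add ht]; congr 1; rw [hνdef]; ring
      calc K * Real.exp (-t) * t ^ (-ν-1) * (t ^ ε / c ^ ε * Real.Gamma ε)
          = (c ^ ε / (Real.Gamma ε * Real.Gamma ζ) * Real.Gamma ε / c ^ ε) *
              (Real.exp (-t) * (t ^ (-ν-1) * t ^ ε)) := by rw [hKdef]; ring
        _ = 1/Real.Gamma ζ * (Real.exp (-t) * t ^ (ζ-1)) := by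
            rw [e5]
            congr 1
            have hcε : (0:ℝ) < c ^ ε := Real.rpow_pos_of_pos hc _
            field_simp
    · refine Integrable.const_mul ?_ _
      refine ((integrableOn_rpow_mul_exp_neg_mul_rpow
        (show (-1:ℝ) < ε - 1 by linarith) (show (0:ℝ) < 1 by norm_num) hct).congr_fun (fun x hx => ?_) measurableSet_Ioi)
      simp only [Real.rpow_one, neg_mul]
    · exact (ae_restrict_iff' measurableSet_Ioi).mpr (ae_of_all _ fun z hz => by
        have hz' := mem_Ioi.mp hz
        positivity)
  rw [setLIntegral_congr_fun measurableSet_Ioi inner2]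
  rw [← ofReal_integral_eq_lintegral_ofReal]
  · rw [integral_const_mul, ← Real.Gamma_eq_integral hζ, one_div,
      inv_mul_cancel₀ hΓζ.ne', ENNReal.ofReal_one]
  · exact (Real.GammaIntegral_convergent hζ).const_mul _
  · exact (ae_restrict_iff' measurableSet_Ioi).mpr (ae_of_all _ fun t ht => by
      have := mem_Ioi.mp ht; positivity)
end

section
/- Craig's formula: for x ≥ 0, Q(√x) = (1/π)∫₀^{π/2} exp(−x/(2 sin²ϑ)) dϑ, where Q(t) = (1/√(2π))∫ₜ^∞ e^{−u²/2} du is the Gaussian tail function. -/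
open Real MeasureTheory Set Filter Topology

lemma mul_exp_neg_le_one (y : ℝ) : y * Real.exp (-y) ≤ 1 := by
  rcases le_or_gt y 0 with h | h
  · calc y * Real.exp (-y) ≤ 0 := mul_nonpos_of_nonpos_of_nonneg h (Real.exp_pos _).le
    _ ≤ 1 := zero_le_one
  · rw [Real.exp_neg, ← div_eq_mul_inv, div_le_one (Real.exp_pos y)]
    linarith [Real.add_one_le_exp y]

lemma gauss_Ioi : ∫ u in Ioi (0:ℝ), Real.exp (-u^2/2) = Real.sqrt (π/2) := by
  have : ∀ u : ℝ, Real.exp (-u^2/2) = Real.exp (-(1/2) * u^2) := fun u => by ring_nf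
  simp_rw [this, integral_gaussian_Ioi]
  rw [show π / (1/2:ℝ) = (π/2) * 2^2 by ring, Real.sqrt_mul (by positivity), Real.sqrt_sq (by norm_num)]
  ring

lemma cot_hasDerivAt {a θ : ℝ} (hs : Real.sin θ ≠ 0) :
    HasDerivAt (fun t => a * (Real.cos t / Real.sin t)) (-(a / Real.sin θ ^ 2)) θ := by
  have h := ((Real.hasDerivAt_cos θ).div (Real.hasDerivAt_sin θ) hs).const_mul a
  refine h.congr_deriv ?_
  rw [show -Real.sin θ * Real.sin θ - Real.cos θ * Real.cos θ = -1 by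
    nlinarith [Real.sin_sq_add_cos_sq θ]]
  field_simp

lemma cot_image {a : ℝ} (ha : 0 < a) :
    (fun t => a * (Real.cos t / Real.sin t)) '' Ioo 0 (π/2) = Ioi 0 := by
  apply Set.eq_of_subset_of_subset
  · rintro t ⟨θ, ⟨h1, h2⟩, rfl⟩
    have hc : 0 < Real.cos θ := Real.cos_pos_of_mem_Ioo ⟨by linarith [Real.pi_pos], h2⟩
    have hsin : 0 < Real.sin θ := Real.sin_pos_of_pos_of_lt_pi h1 (by linarith [Real.pi_pos])
    exact mem_Ioi.2 (by positivity)
  · rintro t (ht : 0 < t)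
    have hpos : 0 < Real.arctan (a / t) := by
      have := Real.arctan_strictMono (show (0:ℝ) < a / t by positivity)
      simpa [Real.arctan_zero] using this
    refine ⟨Real.arctan (a / t), ⟨hpos, Real.arctan_lt_pi_div_two _⟩, ?_⟩
    show a * (Real.cos (Real.arctan (a/t)) / Real.sin (Real.arctan (a/t))) = t
    rw [Real.cos_arctan, Real.sin_arctan]
    have h1 : Real.sqrt (1 + (a/t)^2) ≠ 0 := by positivity
    have h2 : a / t ≠ 0 := by positivity
    field_simp

lemma cot_strictAnti {a : ℝ} (ha : 0 < a) :
    StrictAntiOn (fun t => a * (Real.cos t / Real.sin t)) (Ioo 0 (π/2)) := by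
  apply strictAntiOn_of_deriv_neg (convex_Ioo _ _)
  · apply ContinuousOn.mul continuousOn_const
    apply ContinuousOn.div Real.continuousOn_cos Real.continuousOn_sin
    intro θ hθ
    exact (Real.sin_pos_of_pos_of_lt_pi hθ.1 (by have := hθ.2; linarith [Real.pi_pos])).ne'
  · intro θ hθ
    rw [interior_Ioo] at hθ
    have hsin : 0 < Real.sin θ := Real.sin_pos_of_pos_of_lt_pi hθ.1
      (by have := hθ.2; linarith [Real.pi_pos])
    rw [(cot_hasDerivAt hsin.ne').deriv]
    have : 0 < a / Real.sin θ ^ 2 := by positivity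
    linarith

lemma substitution {a : ℝ} (ha : 0 < a) :
    ∫ θ in Ioo (0:ℝ) (π/2), (a / Real.sin θ ^ 2) * Real.exp (-a^2 / (2 * Real.sin θ ^ 2))
      = Real.sqrt (π/2) * Real.exp (-a^2/2) := by
  have key := integral_image_eq_integral_abs_deriv_smul (f := fun t => a * (Real.cos t / Real.sin t))
    (f' := fun θ => -(a / Real.sin θ ^ 2)) measurableSet_Ioo
    (fun θ hθ => (cot_hasDerivAt
      (Real.sin_pos_of_pos_of_lt_pi hθ.1 (by have := hθ.2; linarith [Real.pi_pos])).ne').hasDerivWithinAt)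
    ((cot_strictAnti ha).injOn) (fun u => Real.exp (-u^2/2))
  rw [cot_image ha, gauss_Ioi] at key
  have congr1 : ∫ θ in Ioo (0:ℝ) (π/2),
      |(-(a / Real.sin θ ^ 2))| • Real.exp (-(a * (Real.cos θ / Real.sin θ))^2/2)
      = ∫ θ in Ioo (0:ℝ) (π/2),
        Real.exp (a^2/2) * ((a / Real.sin θ ^ 2) * Real.exp (-a^2 / (2 * Real.sin θ ^ 2))) := by
    apply setIntegral_congr_fun measurableSet_Ioo
    intro θ hθ
    obtain ⟨h1, h2⟩ := hθ
    have hsin : 0 < Real.sin θ := Real.sin_pos_of_pos_of_lt_pi h1 (by linarith [Real.pi_pos])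
    have hd : 0 < a / Real.sin θ ^ 2 := by positivity
    have hexp : -(a * (Real.cos θ / Real.sin θ))^2/2 = a^2/2 + -a^2 / (2 * Real.sin θ ^ 2) := by
      have hss : Real.sin θ ^ 2 ≠ 0 := by positivity
      have hc : Real.cos θ ^ 2 = 1 - Real.sin θ ^ 2 := Real.cos_sq' θ
      field_simp
      linear_combination (-1) * hc
    dsimp only
    rw [hexp, Real.exp_add, smul_eq_mul, abs_of_neg (by linarith), neg_neg]
    ring
  rw [congr1, integral_const_mul] at key
  have h3 : Real.exp (a^2/2) ≠ 0 := (Real.exp_pos _).ne'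
  have hinv : Real.exp (-a^2/2) = (Real.exp (a^2/2))⁻¹ := by
    rw [← Real.exp_neg]; ring_nf
  rw [hinv, key]; field_simp

noncomputable def G (a : ℝ) : ℝ := ∫ θ in Ioc (0:ℝ) (π/2), Real.exp (-a^2 / (2 * Real.sin θ ^ 2))

lemma G_hasDeriv {a : ℝ} (ha : 0 < a) :
    HasDerivAt G (-(Real.sqrt (π/2) * Real.exp (-a^2/2))) a := by
  haveI : IsFiniteMeasure (volume.restrict (Ioc (0:ℝ) (π/2))) :=
    ⟨by rw [Measure.restrict_apply_univ]; exact measure_Ioc_lt_top⟩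
  have hmeas : ∀ x : ℝ, AEStronglyMeasurable
      (fun θ => Real.exp (-x^2 / (2 * Real.sin θ ^ 2))) (volume.restrict (Ioc (0:ℝ) (π/2))) := by
    intro x; apply Measurable.aestronglyMeasurable; fun_prop
  have key := hasDerivAt_integral_of_dominated_loc_of_deriv_le
    (F := fun x θ => Real.exp (-x^2 / (2 * Real.sin θ ^ 2)))
    (F' := fun x θ => -(x / Real.sin θ ^ 2 * Real.exp (-x^2 / (2 * Real.sin θ ^ 2))))
    (x₀ := a) (s := Metric.ball a (a/2)) (bound := fun _ => 4/a) (Metric.ball_mem_nhds a (by positivity))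
    (Filter.Eventually.of_forall hmeas)
    ?_ ?_ ?_ (integrable_const (4/a)) ?_
  · have heq : (∫ θ in Ioc (0:ℝ) (π/2),
        -(a / Real.sin θ ^ 2 * Real.exp (-a^2 / (2 * Real.sin θ ^ 2))))
        = -(Real.sqrt (π/2) * Real.exp (-a^2/2)) := by
      rw [integral_neg, integral_Ioc_eq_integral_Ioo]
      rw [substitution ha]
    rw [heq] at key
    exact key.2
  · -- integrability of F a
    apply (integrable_const (1:ℝ)).mono' (hmeas a)
    filter_upwards with θ
    rw [Real.norm_eq_abs, abs_of_pos (Real.exp_pos _)]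
    apply Real.exp_le_one_iff.2
    have : (0:ℝ) ≤ a^2 / (2 * Real.sin θ ^ 2) := by positivity
    rw [neg_div]
    linarith
  · apply Measurable.aestronglyMeasurable; fun_prop
  · -- bound
    filter_upwards [ae_restrict_mem measurableSet_Ioc] with θ hθ
    intro x hx
    have hsin : 0 < Real.sin θ :=
      Real.sin_pos_of_pos_of_lt_pi hθ.1 (by have := hθ.2; linarith [Real.pi_pos])
    rw [Metric.mem_ball, Real.dist_eq] at hx
    have hxa : a/2 < x := by cases abs_lt.1 hx; linarith
    have hx0 : 0 < x := by linarith
    have hs2 : 0 < Real.sin θ ^ 2 := by positivity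
    rw [Real.norm_eq_abs, abs_neg, abs_of_pos (by positivity)]
    have hy : x / Real.sin θ ^ 2 * Real.exp (-x^2 / (2 * Real.sin θ ^ 2))
        = (2/x) * ((x^2/(2 * Real.sin θ ^ 2)) * Real.exp (-(x^2/(2 * Real.sin θ ^ 2)))) := by
      rw [show -x^2/(2 * Real.sin θ ^ 2) = -(x^2/(2 * Real.sin θ ^ 2)) by ring]
      field_simp
    rw [hy]
    calc (2/x) * ((x^2/(2 * Real.sin θ ^ 2)) * Real.exp (-(x^2/(2 * Real.sin θ ^ 2))))
        ≤ (2/x) * 1 := by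
          apply mul_le_mul_of_nonneg_left (mul_exp_neg_le_one _) (by positivity)
      _ = 2/x := mul_one _
      _ ≤ 4/a := by
          rw [div_le_div_iff₀ hx0 ha]
          linarith
  · -- differentiability
    filter_upwards [ae_restrict_mem measurableSet_Ioc] with θ hθ
    intro x hx
    have hsin : 0 < Real.sin θ :=
      Real.sin_pos_of_pos_of_lt_pi hθ.1 (by have := hθ.2; linarith [Real.pi_pos])
    have hs2 : (0:ℝ) < Real.sin θ ^ 2 := by positivity
    have h1 : HasDerivAt (fun x : ℝ => -x^2 / (2 * Real.sin θ ^ 2))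
        (-(2 * x^1) / (2 * Real.sin θ ^ 2)) x := by
      have h0 : HasDerivAt (fun y : ℝ => -(y^2 / (2 * Real.sin θ ^ 2))) _ x :=
        ((hasDerivAt_pow 2 x).div_const (2 * Real.sin θ ^ 2)).neg
      simpa [neg_div] using h0
    have h2 := h1.exp
    refine h2.congr_deriv ?_
    field_simp

lemma expgauss_cont : Continuous (fun u : ℝ => Real.exp (-u^2/2)) := by fun_prop

lemma expgauss_integrable : Integrable (fun u : ℝ => Real.exp (-u^2/2)) := by
  have : ∀ u:ℝ, Real.exp (-u^2/2) = Real.exp (-(1/2)*u^2) := fun u => by ring_nf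
  simp_rw [this]; exact integrable_exp_neg_mul_sq (by norm_num)

noncomputable def P (a : ℝ) : ℝ :=
  (∫ u in Ioi (0:ℝ), Real.exp (-u^2/2)) - ∫ u in (0:ℝ)..a, Real.exp (-u^2/2)

lemma P_eq {a : ℝ} (ha : 0 ≤ a) : P a = ∫ u in Ioi a, Real.exp (-u^2/2) := by
  unfold P
  rw [intervalIntegral.integral_of_le ha, ← Set.Ioc_union_Ioi_eq_Ioi ha,
    setIntegral_union (Set.Ioc_disjoint_Ioi le_rfl) measurableSet_Ioi
      expgauss_integrable.integrableOn expgauss_integrable.integrableOn]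
  ring

lemma P_hasDeriv (a : ℝ) : HasDerivAt P (-(Real.exp (-a^2/2))) a := by
  have h := (expgauss_cont.integral_hasStrictDerivAt 0 a).hasDerivAt
  exact h.const_sub _

lemma P_cont : Continuous P :=
  continuous_const.sub (intervalIntegral.continuous_primitive
    (fun a b => expgauss_cont.intervalIntegrable a b) 0)

lemma sqrt_prod : Real.sqrt (π/2) * Real.sqrt (2*π) = π := by
  rw [← Real.sqrt_mul (by positivity), show (π/2)*(2*π) = π^2 by ring,
    Real.sqrt_sq Real.pi_pos.le]

lemma key0 : (1:ℝ)/Real.sqrt (2*π) = (1/π) * Real.sqrt (π/2) := by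
  have hs : Real.sqrt (2*π) ≠ 0 := by positivity
  rw [div_mul_eq_mul_div, one_mul, div_eq_div_iff hs Real.pi_ne_zero, one_mul, mul_comm]
  rw [mul_comm]; exact sqrt_prod.symm

noncomputable def Φ (a : ℝ) : ℝ := (1/Real.sqrt (2*π)) * P a - (1/π) * G a

lemma Φ_hasDeriv {a : ℝ} (ha : 0 < a) : HasDerivAt Φ 0 a := by
  have h := ((P_hasDeriv a).const_mul (1/Real.sqrt (2*π))).sub
    ((G_hasDeriv ha).const_mul (1/π))
  refine h.congr_deriv ?_
  rw [key0]; ring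

lemma G_zero : G 0 = π/2 := by
  unfold G
  simp only [ne_eq, OfNat.ofNat_ne_zero, not_false_eq_true, zero_pow, neg_zero, zero_div,
    Real.exp_zero]
  rw [setIntegral_const, Real.volume_real_Ioc_of_le (by linarith [Real.pi_pos]), smul_eq_mul, mul_one]
  norm_num

lemma G_tendsto : Tendsto G (𝓝[>] (0:ℝ)) (𝓝 (π/2)) := by
  haveI : IsFiniteMeasure (volume.restrict (Ioc (0:ℝ) (π/2))) :=
    ⟨by rw [Measure.restrict_apply_univ]; exact measure_Ioc_lt_top⟩
  have h := tendsto_integral_filter_of_dominated_convergence (μ := volume.restrict (Ioc (0:ℝ) (π/2)))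
    (F := fun (x : ℝ) θ => Real.exp (-x^2 / (2 * Real.sin θ ^ 2)))
    (f := fun _ => (1:ℝ)) (l := 𝓝[>] (0:ℝ)) (bound := fun _ => (1:ℝ))
    (Filter.Eventually.of_forall fun x => by
      apply Measurable.aestronglyMeasurable; fun_prop)
    (Filter.Eventually.of_forall fun x => by
      filter_upwards with θ
      rw [Real.norm_eq_abs, abs_of_pos (Real.exp_pos _)]
      apply Real.exp_le_one_iff.2
      have : (0:ℝ) ≤ x^2 / (2 * Real.sin θ ^ 2) := by positivity
      rw [neg_div]; linarith)
    (integrable_const 1)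
    ?_
  · have : (∫ _θ in Ioc (0:ℝ) (π/2), (1:ℝ)) = π/2 := by
      rw [setIntegral_const, Real.volume_real_Ioc_of_le (by linarith [Real.pi_pos]), smul_eq_mul, mul_one]
      norm_num
    rwa [this] at h
  · filter_upwards [ae_restrict_mem measurableSet_Ioc] with θ hθ
    have hsin : 0 < Real.sin θ :=
      Real.sin_pos_of_pos_of_lt_pi hθ.1 (by have := hθ.2; linarith [Real.pi_pos])
    have hc : Continuous (fun x : ℝ => Real.exp (-x^2 / (2 * Real.sin θ ^ 2))) := by fun_prop
    have := (hc.tendsto 0).mono_left (nhdsWithin_le_nhds (s := Set.Ioi (0:ℝ)))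
    simpa using this

lemma Φ_zero : Φ 0 = 0 := by
  unfold Φ
  have hP : P 0 = Real.sqrt (π/2) := by
    unfold P; rw [intervalIntegral.integral_same, sub_zero, gauss_Ioi]
  rw [hP, G_zero]
  have h : Real.sqrt (π/2) * Real.sqrt (π/2) = π/2 := Real.mul_self_sqrt (by positivity)
  rw [key0, mul_assoc, h]
  ring

lemma Φ_eq_zero {b : ℝ} (hb : 0 ≤ b) : Φ b = 0 := by
  rcases eq_or_lt_of_le hb with rfl | hb'
  · exact Φ_zero
  have const : ∀ ε, ε ∈ Ioc (0:ℝ) b → Φ b = Φ ε := by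
    intro ε hε
    have := constant_of_has_deriv_right_zero (f := Φ) (a := ε) (b := b)
      (fun x hx => (Φ_hasDeriv (lt_of_lt_of_le hε.1 hx.1)).continuousAt.continuousWithinAt)
      (fun x hx => (Φ_hasDeriv (lt_of_lt_of_le hε.1 hx.1)).hasDerivWithinAt)
    exact this b ⟨hε.2, le_rfl⟩
  -- Φ is eventually constant = Φ b near 0⁺, and tends to Φ 0
  have h1 : Tendsto Φ (𝓝[>] (0:ℝ)) (𝓝 (Φ 0)) := by
    unfold Φ
    have hP := ((P_cont.tendsto 0).const_mul (1/Real.sqrt (2*π))).mono_left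
      (nhdsWithin_le_nhds (s := Set.Ioi (0:ℝ)))
    have hG := G_tendsto.const_mul (1/π)
    rw [← G_zero] at hG
    exact hP.sub hG
  have h2 : Tendsto Φ (𝓝[>] (0:ℝ)) (𝓝 (Φ b)) := by
    apply Tendsto.congr' _ tendsto_const_nhds
    filter_upwards [Ioc_mem_nhdsGT_of_mem (Set.mem_Ico.2 ⟨le_rfl, hb'⟩)] with ε hε
    exact const ε hε
  rw [tendsto_nhds_unique h2 h1, Φ_zero]

theorem stmt_16 (x : ℝ) (hx : 0 ≤ x) :
    (1 / Real.sqrt (2 * π)) * (∫ u in Set.Ioi (Real.sqrt x), Real.exp (-u^2 / 2)) =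
    (1 / π) * ∫ ϑ in (0:ℝ)..(π / 2), Real.exp (-x / (2 * Real.sin ϑ ^ 2)) := by
  have ha : 0 ≤ Real.sqrt x := Real.sqrt_nonneg x
  have hΦ := Φ_eq_zero ha
  unfold Φ at hΦ
  rw [P_eq ha] at hΦ
  have hG : G (Real.sqrt x) = ∫ ϑ in (0:ℝ)..(π / 2), Real.exp (-x / (2 * Real.sin ϑ ^ 2)) := by
    unfold G
    rw [intervalIntegral.integral_of_le (by positivity)]
    simp_rw [Real.sq_sqrt hx]
  rw [hG] at hΦ
  linarith
end

section
/- Fix g > 0 and C₁ > 0, and define P(N) = C₁((√(βN)+√(βN+1))²(1-β)N)^{-2g} for a fixed β ∈ (0,1). Then −lim_{N→∞} log P(N)/log N = 4g, whereas for β = 0 (so P(N) = C₁ N^{-2g}) the limit equals 2g. -/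
open Real Filter

theorem stmt_17 (g C₁ β : ℝ) (hg : 0 < g) (hC : 0 < C₁) (hβ : β ∈ Set.Ioo (0:ℝ) 1) :
    Tendsto (fun N : ℝ =>
        -(Real.log (C₁ * ((Real.sqrt (β * N) + Real.sqrt (β * N + 1))^2 * (1 - β) * N)
            ^ (-(2 * g))) / Real.log N)) atTop (nhds (4 * g)) ∧
    Tendsto (fun N : ℝ =>
        -(Real.log (C₁ * N ^ (-(2 * g))) / Real.log N)) atTop (nhds (2 * g)) := by
  obtain ⟨hβ0, hβ1⟩ := hβ
  have h1β : 0 < 1 - β := by linarith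
  have hloginv : Tendsto (fun N : ℝ => (Real.log N)⁻¹) atTop (nhds 0) :=
    Real.tendsto_log_atTop.inv_tendsto_atTop
  set A : ℝ → ℝ := fun N => (Real.sqrt (β * N) + Real.sqrt (β * N + 1))^2 * (1 - β) * N
    with hAdef
  constructor
  · -- part 1
    have hratio : Tendsto (fun N : ℝ => A N / N^2) atTop (nhds (4*β*(1-β))) := by
      have h1 : Tendsto (fun N : ℝ => β + 1/N) atTop (nhds β) := by
        simpa [one_div] using (tendsto_const_nhds : Tendsto (fun _ : ℝ => β) atTop (nhds β)).add tendsto_inv_atTop_zero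
      have h2 : Tendsto (fun N : ℝ => Real.sqrt (β + 1/N)) atTop (nhds (Real.sqrt β)) :=
        (Real.continuous_sqrt.tendsto β).comp h1
      have key : Tendsto (fun N : ℝ => (Real.sqrt β + Real.sqrt (β + 1/N))^2 * (1-β)) atTop
          (nhds (4*β*(1-β))) := by
        have heq : (Real.sqrt β + Real.sqrt β)^2 * (1-β) = 4*β*(1-β) := by
          linear_combination (4*(1-β)) * (Real.sq_sqrt hβ0.le)
        rw [← heq]
        exact ((tendsto_const_nhds.add h2).pow 2).mul tendsto_const_nhds
      refine key.congr' ?_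
      filter_upwards [eventually_gt_atTop (0:ℝ)] with N hN
      have hs1 : Real.sqrt (β * N) = Real.sqrt β * Real.sqrt N := Real.sqrt_mul hβ0.le N
      have hs2 : Real.sqrt (β * N + 1) = Real.sqrt (β + 1/N) * Real.sqrt N := by
        rw [← Real.sqrt_mul (by positivity) N]
        congr 1
        field_simp
      have hNsq : Real.sqrt N ^ 2 = N := Real.sq_sqrt hN.le
      simp only [hAdef]
      rw [hs1, hs2]
      field_simp
      ring_nf
      exact hNsq.symm
    have hLpos : 0 < 4*β*(1-β) := by positivity
    have hlogA : Tendsto (fun N : ℝ => Real.log (A N / N^2)) atTop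
        (nhds (Real.log (4*β*(1-β)))) :=
      ((Real.continuousAt_log hLpos.ne').tendsto).comp hratio
    have hc : Tendsto (fun N : ℝ =>
        (-Real.log C₁ + 2*g * Real.log (A N / N^2)) * (Real.log N)⁻¹) atTop (nhds 0) := by
      have := (((tendsto_const_nhds : Tendsto (fun _ : ℝ => -Real.log C₁) atTop (nhds (-Real.log C₁))).add (hlogA.const_mul (2*g))).mul hloginv)
      simpa using this
    have final := (tendsto_const_nhds : Tendsto (fun _ : ℝ => 4*g) atTop (nhds (4*g))).add hc
    rw [add_zero] at final
    refine final.congr' ?_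
    filter_upwards [eventually_ge_atTop (2:ℝ)] with N hN
    have hN0 : 0 < N := by linarith
    have hlogN : 0 < Real.log N := Real.log_pos (by linarith)
    have hApos : 0 < A N := by
      have hsq : 0 < Real.sqrt (β * N + 1) := Real.sqrt_pos.2 (by positivity)
      have hs : 0 < Real.sqrt (β * N) + Real.sqrt (β * N + 1) := by
        have := Real.sqrt_nonneg (β * N); linarith
      simp only [hAdef]
      positivity
    have hrp : (0:ℝ) < A N ^ (-(2*g)) := Real.rpow_pos_of_pos hApos _
    have e1 : Real.log (C₁ * A N ^ (-(2*g))) = Real.log C₁ + (-(2*g)) * Real.log (A N) :=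
      by rw [Real.log_mul hC.ne' hrp.ne', Real.log_rpow hApos]
    have e2 : Real.log (A N / N^2) = Real.log (A N) - 2 * Real.log N := by
      rw [Real.log_div hApos.ne' (by positivity), Real.log_pow]
      push_cast; ring
    show _ = -(Real.log (C₁ * A N ^ (-(2*g))) / Real.log N)
    rw [e1, e2]
    field_simp
    ring
  · -- part 2
    have hc : Tendsto (fun N : ℝ => (-Real.log C₁) * (Real.log N)⁻¹) atTop (nhds 0) := by
      simpa using hloginv.const_mul (-Real.log C₁)
    have final := (tendsto_const_nhds : Tendsto (fun _ : ℝ => 2*g) atTop (nhds (2*g))).add hc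
    rw [add_zero] at final
    refine final.congr' ?_
    filter_upwards [eventually_ge_atTop (2:ℝ)] with N hN
    have hN0 : 0 < N := by linarith
    have hlogN : 0 < Real.log N := Real.log_pos (by linarith)
    have hrp : (0:ℝ) < N ^ (-(2*g)) := Real.rpow_pos_of_pos hN0 _
    have e1 : Real.log (C₁ * N ^ (-(2*g))) = Real.log C₁ + (-(2*g)) * Real.log N :=
      by rw [Real.log_mul hC.ne' hrp.ne', Real.log_rpow hN0]
    rw [e1]
    field_simp
    ring
end
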